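/- The triple integral over y₁, y₂, y₃ ∈ (0, ∞) of the function min(1, y₁) · min(y₁, y₂) · min(y₂, y₃) · min(1, y₁, y₂, y₃) / (y₁² y₂² y₃²) equals 14, where min(1, y₁, y₂, y₃) denotes the minimum of the four numbers. -/

import Mathlib

open MeasureTheory
open Set Real Filter

lemma ftcIoi {a l : ℝ} {g g' : ℝ → ℝ} (hderiv : ∀ x ∈ Ici a, HasDerivAt g (g' x) x)
    (hpos : ∀ x ∈ Ioi a, 0 ≤ g' x) (hl : Tendsto g atTop (nhds l)) :
    IntegrableOn g' (Ioi a) ∧ ∫ x in Ioi a, g' x = l - g a :=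
  ⟨integrableOn_Ioi_deriv_of_nonneg' hderiv hpos hl,
   integral_Ioi_of_hasDerivAt_of_nonneg' hderiv hpos hl⟩

lemma tend1 : Tendsto (fun y : ℝ => log y / y) atTop (nhds 0) := by
  simpa using Real.tendsto_pow_log_div_mul_add_atTop 1 0 1 one_ne_zero

lemma tend2 : Tendsto (fun y : ℝ => (log y)^2 / y) atTop (nhds 0) := by
  simpa using Real.tendsto_pow_log_div_mul_add_atTop 1 0 2 one_ne_zero

lemma tend0 (c : ℝ) : Tendsto (fun y : ℝ => c / y) atTop (nhds 0) := by
  simpa using tendsto_const_nhds.div_atTop (tendsto_id (α := ℝ))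

-- ∫_{Ioi c} k/y² = k/c
lemma P1 {c k : ℝ} (hc : 0 < c) (hk : 0 ≤ k) :
    IntegrableOn (fun y : ℝ => k / y^2) (Ioi c) ∧ ∫ y in Ioi c, k / y^2 = k / c := by
  have h := ftcIoi (a := c) (l := 0) (g := fun y => -(k/y)) (g' := fun y => k / y^2)
    (fun x hx => by
      have hx0 : x ≠ 0 := (lt_of_lt_of_le hc hx).ne'
      have : HasDerivAt (fun y : ℝ => -(k/y)) (-(k * -(x^2)⁻¹)) x := by
        simpa [div_eq_mul_inv] using ((hasDerivAt_inv hx0).const_mul k).fun_neg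
      convert this using 1
      field_simp)
    (fun x hx => by positivity)
    (by simpa using (tend0 k).neg)
  refine ⟨h.1, ?_⟩
  rw [h.2]; ring

-- ∫_{Ioi t} (2 + (log y - log t))/y² = 3/t
lemma P2 {t : ℝ} (ht : 0 < t) :
    IntegrableOn (fun y : ℝ => (2 + (log y - log t)) / y^2) (Ioi t) ∧
      ∫ y in Ioi t, (2 + (log y - log t)) / y^2 = 3 / t := by
  have h := ftcIoi (a := t) (l := 0) (g := fun y => (log t - 3 - log y)/y)
    (g' := fun y => (2 + (log y - log t)) / y^2)
    (fun x hx => by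
      have hx0 : 0 < x := lt_of_lt_of_le ht hx
      have : HasDerivAt (fun y : ℝ => (log t - 3 - log y)/y)
          (((0 - x⁻¹) * x - (log t - 3 - log x) * 1) / x^2) x :=
        (((hasDerivAt_const x (log t - 3)).sub (Real.hasDerivAt_log hx0.ne'))).div
          (hasDerivAt_id x) hx0.ne'
      convert this using 1
      field_simp; ring)
    (fun x hx => by
      have hx0 : 0 < x := lt_trans ht hx
      have hlt : log t ≤ log x := Real.log_le_log ht (le_of_lt hx)
      have h2 : (0:ℝ) ≤ 2 + (log x - log t) := by linarith
      positivity)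
    (by
      have h1 : Tendsto (fun y : ℝ => (log t - 3) / y - log y / y) atTop (nhds (0 - 0)) :=
        (tend0 _).sub tend1
      simp only [sub_zero] at h1
      refine h1.congr' ?_
      filter_upwards [eventually_gt_atTop 0] with y hy
      field_simp)
  refine ⟨h.1, ?_⟩
  rw [h.2]
  field_simp
  ring

-- ∫_{Ioi s} (2 + log y)/y² = (3 + log s)/s,  s ≥ 1
lemma P3 {s : ℝ} (hs : 1 ≤ s) :
    IntegrableOn (fun y : ℝ => (2 + log y) / y^2) (Ioi s) ∧
      ∫ y in Ioi s, (2 + log y) / y^2 = (3 + log s) / s := by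
  have hs0 : 0 < s := lt_of_lt_of_le one_pos hs
  have h := ftcIoi (a := s) (l := 0) (g := fun y => (-3 - log y)/y)
    (g' := fun y => (2 + log y) / y^2)
    (fun x hx => by
      have hx0 : 0 < x := lt_of_lt_of_le hs0 hx
      have : HasDerivAt (fun y : ℝ => (-3 - log y)/y)
          (((0 - x⁻¹) * x - (-3 - log x) * 1) / x^2) x :=
        (((hasDerivAt_const x (-3)).sub (Real.hasDerivAt_log hx0.ne'))).div
          (hasDerivAt_id x) hx0.ne'
      convert this using 1
      field_simp; ring)
    (fun x hx => by
      have hx0 : 0 < x := lt_of_le_of_lt hs0.le hx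
      have hlt : (0:ℝ) ≤ log x := Real.log_nonneg (le_of_lt (lt_of_le_of_lt hs hx))
      positivity)
    (by
      have h1 : Tendsto (fun y : ℝ => (-3) / y - log y / y) atTop (nhds (0 - 0)) :=
        (tend0 _).sub tend1
      simp only [sub_zero] at h1
      refine h1.congr' ?_
      filter_upwards [eventually_gt_atTop 0] with y hy
      field_simp)
  refine ⟨h.1, ?_⟩
  rw [h.2]
  field_simp
  ring

-- ∫_{Ioi 1} (5 + 3 log y + (log y)²/2)/y² = 9
lemma P4 :
    IntegrableOn (fun y : ℝ => (5 + 3 * log y + (log y)^2/2) / y^2) (Ioi 1) ∧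
      ∫ y in Ioi 1, (5 + 3 * log y + (log y)^2/2) / y^2 = 9 := by
  have h := ftcIoi (a := 1) (l := 0)
    (g := fun y => -(9 + 4 * log y + (log y)^2/2)/y)
    (g' := fun y => (5 + 3 * log y + (log y)^2/2) / y^2)
    (fun x hx => by
      have hx0 : 0 < x := lt_of_lt_of_le one_pos hx
      have hlog : HasDerivAt (fun y : ℝ => -(9 + 4 * log y + (log y)^2/2))
          (-(4 * x⁻¹ + (↑2 * log x ^ (2-1) * x⁻¹)/2)) x := by
        have := ((((Real.hasDerivAt_log hx0.ne').const_mul 4).add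
          (((Real.hasDerivAt_log hx0.ne').pow 2).div_const 2)).const_add 9).fun_neg
        convert this using 2 with y
        all_goals norm_num
        · rfl
        · rfl
        · ring
        · rfl
      have : HasDerivAt (fun y : ℝ => -(9 + 4 * log y + (log y)^2/2)/y)
          ((-(4 * x⁻¹ + (↑2 * log x ^ (2-1) * x⁻¹)/2) * x
            - (-(9 + 4 * log x + (log x)^2/2)) * 1) / x^2) x :=
        hlog.div (hasDerivAt_id x) hx0.ne'
      convert this using 1
      field_simp; ring)
    (fun x hx => by
      have hx0 : 0 < x := lt_of_le_of_lt one_pos.le hx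
      have hlt : (0:ℝ) ≤ log x := Real.log_nonneg (le_of_lt hx)
      positivity)
    (by
      have h1 : Tendsto (fun y : ℝ => -((9:ℝ) / y + 4 * (log y / y) + ((log y)^2 / y)/2))
          atTop (nhds (-(0 + 4 * 0 + 0/2))) :=
        (((tend0 9).add (tend1.const_mul 4)).add (tend2.div_const 2)).neg
      simp only [mul_zero, add_zero, zero_div, neg_zero] at h1
      refine h1.congr' ?_
      filter_upwards [eventually_gt_atTop 0] with y hy
      field_simp)
  refine ⟨h.1, ?_⟩
  rw [h.2]
  norm_num

lemma splitIoi (f : ℝ → ℝ) {c d : ℝ} (hcd : c ≤ d) (h1 : IntegrableOn f (Ioc c d))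
    (h2 : IntegrableOn f (Ioi d)) :
    ∫ y in Ioi c, f y = (∫ y in Ioc c d, f y) + ∫ y in Ioi d, f y := by
  rw [← Ioc_union_Ioi_eq_Ioi hcd]
  exact setIntegral_union Ioc_disjoint_Ioi_same measurableSet_Ioi h1 h2

lemma Pconst {c d k : ℝ} (hcd : c ≤ d) :
    ∫ y in Ioc c d, (k : ℝ) = k * (d - c) := by
  rw [setIntegral_const, Real.volume_real_Ioc_of_le hcd]
  rw [smul_eq_mul]; ring

-- ∫_{Ioc c d} k/y = k (log d - log c)
lemma Pinv {c d k : ℝ} (hc : 0 < c) (hcd : c ≤ d) :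
    IntegrableOn (fun y : ℝ => k / y) (Ioc c d) ∧
      ∫ y in Ioc c d, k / y = k * (log d - log c) := by
  have hd : 0 < d := lt_of_lt_of_le hc hcd
  have hcont : ContinuousOn (fun y : ℝ => k / y) (uIcc c d) := by
    apply ContinuousOn.div continuousOn_const continuousOn_id
    intro x hx
    rw [uIcc_of_le hcd] at hx
    exact (lt_of_lt_of_le hc hx.1).ne'
  have hii : IntervalIntegrable (fun y : ℝ => k / y) volume c d :=
    hcont.intervalIntegrable
  refine ⟨(intervalIntegrable_iff_integrableOn_Ioc_of_le hcd).1 hii, ?_⟩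
  rw [← intervalIntegral.integral_of_le hcd]
  simp only [div_eq_mul_inv]
  rw [intervalIntegral.integral_const_mul, integral_inv_of_pos hc hd,
    Real.log_div hd.ne' hc.ne']

-- ∫_{Ioc 1 s} (2 + log y)/y = 2 log s + (log s)²/2
lemma P5 {s : ℝ} (hs : 1 ≤ s) :
    IntegrableOn (fun y : ℝ => (2 + log y) / y) (Ioc 1 s) ∧
      ∫ y in Ioc 1 s, (2 + log y) / y = 2 * log s + (log s)^2/2 := by
  have hcont : ContinuousOn (fun y : ℝ => (2 + log y) / y) (uIcc 1 s) := by
    rw [uIcc_of_le hs]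
    have hne : ∀ x ∈ Icc (1:ℝ) s, x ≠ 0 := fun x hx => (lt_of_lt_of_le one_pos hx.1).ne'
    exact ContinuousOn.div
      (continuousOn_const.add (Real.continuousOn_log.mono (fun x hx => hne x hx)))
      continuousOn_id hne
  have hii : IntervalIntegrable (fun y : ℝ => (2 + log y) / y) volume 1 s :=
    hcont.intervalIntegrable
  refine ⟨(intervalIntegrable_iff_integrableOn_Ioc_of_le hs).1 hii, ?_⟩
  rw [← intervalIntegral.integral_of_le hs]
  have := intervalIntegral.integral_eq_sub_of_hasDerivAt
    (f := fun y => 2 * log y + (log y)^2/2)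
    (f' := fun y => (2 + log y) / y) (a := 1) (b := s)
    (fun x hx => by
      rw [uIcc_of_le hs] at hx
      have hx0 : 0 < x := lt_of_lt_of_le one_pos hx.1
      have : HasDerivAt (fun y : ℝ => 2 * log y + (log y)^2/2)
          (2 * x⁻¹ + (↑2 * log x ^ (2-1) * x⁻¹)/2) x :=
        ((Real.hasDerivAt_log hx0.ne').const_mul 2).add
          (((Real.hasDerivAt_log hx0.ne').pow 2).div_const 2)
      convert this using 1
      all_goals norm_num
      · rfl
      · rfl
      · field_simp) hii
  rw [this]
  simp

-- Lemma A : ∫_{y>0} min a y · min b y / y² = b (2 + log a − log b),  0 < b ≤ a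
lemma LemA {a b : ℝ} (hb : 0 < b) (hba : b ≤ a) :
    ∫ y in Ioi 0, min a y * min b y / y^2 = b * (2 + (log a - log b)) := by
  have ha : 0 < a := lt_of_lt_of_le hb hba
  have E1 : EqOn (fun _ : ℝ => (1:ℝ)) (fun y => min a y * min b y / y^2) (Ioc 0 b) := by
    intro y hy
    have h1 : min a y = y := min_eq_right (hy.2.trans hba)
    have h2 : min b y = y := min_eq_right hy.2
    simp only [h1, h2]
    field_simp [hy.1.ne']
  have E2 : EqOn (fun y : ℝ => b / y) (fun y => min a y * min b y / y^2) (Ioc b a) := by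
    intro y hy
    have h1 : min a y = y := min_eq_right hy.2
    have h2 : min b y = b := min_eq_left hy.1.le
    have hy0 : (0:ℝ) < y := lt_trans hb hy.1
    simp only [h1, h2]
    field_simp
  have E3 : EqOn (fun y : ℝ => a * b / y^2) (fun y => min a y * min b y / y^2) (Ioi a) := by
    intro y hy
    have h1 : min a y = a := min_eq_left (le_of_lt hy)
    have h2 : min b y = b := min_eq_left (hba.trans (le_of_lt hy))
    simp only [h1, h2]
  have i1 : IntegrableOn (fun y : ℝ => min a y * min b y / y^2) (Ioc 0 b) :=
    (integrableOn_const (C := (1:ℝ)) measure_Ioc_lt_top.ne).congr_fun E1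
      measurableSet_Ioc
  have i2 : IntegrableOn (fun y : ℝ => min a y * min b y / y^2) (Ioc b a) :=
    (Pinv hb hba).1.congr_fun E2 measurableSet_Ioc
  have i3 : IntegrableOn (fun y : ℝ => min a y * min b y / y^2) (Ioi a) :=
    (P1 ha (by positivity : (0:ℝ) ≤ a * b)).1.congr_fun E3 measurableSet_Ioi
  have v1 : ∫ y in Ioc 0 b, min a y * min b y / y^2 = b := by
    rw [setIntegral_congr_fun measurableSet_Ioc E1.symm, Pconst hb.le]
    ring
  have v2 : ∫ y in Ioc b a, min a y * min b y / y^2 = b * (log a - log b) := by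
    rw [setIntegral_congr_fun measurableSet_Ioc E2.symm, (Pinv hb hba).2]
  have v3 : ∫ y in Ioi a, min a y * min b y / y^2 = b := by
    rw [setIntegral_congr_fun measurableSet_Ioi E3.symm,
      (P1 (k := a*b) ha (by positivity)).2]
    field_simp
  have i23 : IntegrableOn (fun y : ℝ => min a y * min b y / y^2) (Ioi b) := by
    rw [← Ioc_union_Ioi_eq_Ioi hba]; exact i2.union i3
  rw [splitIoi _ hb.le i1 i23, splitIoi _ hba i2 i3, v1, v2, v3]
  ring

-- Lemma B1: ∫_{y>0} (min t y)² (2 + log y − log(min t y)) / y² = 5t,  t > 0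
lemma LemB1 {t : ℝ} (ht : 0 < t) :
    ∫ y in Ioi 0, min t y * min t y * (2 + (log y - log (min t y))) / y^2 = 5 * t := by
  have E1 : EqOn (fun _ : ℝ => (2:ℝ))
      (fun y => min t y * min t y * (2 + (log y - log (min t y))) / y^2) (Ioc 0 t) := by
    intro y hy
    have h1 : min t y = y := min_eq_right hy.2
    simp only [h1, sub_self, add_zero]
    field_simp [hy.1.ne']
  have E2 : EqOn (fun y : ℝ => t^2 * ((2 + (log y - log t)) / y^2))
      (fun y => min t y * min t y * (2 + (log y - log (min t y))) / y^2) (Ioi t) := by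
    intro y hy
    have h1 : min t y = t := min_eq_left (le_of_lt hy)
    simp only [h1]
    ring
  have i1 : IntegrableOn
      (fun y : ℝ => min t y * min t y * (2 + (log y - log (min t y))) / y^2) (Ioc 0 t) :=
    (integrableOn_const (C := (2:ℝ)) measure_Ioc_lt_top.ne).congr_fun E1
      measurableSet_Ioc
  have i2 : IntegrableOn
      (fun y : ℝ => min t y * min t y * (2 + (log y - log (min t y))) / y^2) (Ioi t) :=
    IntegrableOn.congr_fun ((P2 ht).1.const_mul (t^2)) E2 measurableSet_Ioi
  have v1 : ∫ y in Ioc 0 t, min t y * min t y * (2 + (log y - log (min t y))) / y^2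
      = 2 * t := by
    rw [setIntegral_congr_fun measurableSet_Ioc E1.symm, Pconst ht.le]
    ring
  have v2 : ∫ y in Ioi t, min t y * min t y * (2 + (log y - log (min t y))) / y^2
      = 3 * t := by
    rw [setIntegral_congr_fun measurableSet_Ioi E2.symm, integral_const_mul, (P2 ht).2]
    field_simp
  rw [splitIoi _ ht.le i1 i2, v1, v2]
  ring

-- Lemma B2: ∫_{y>0} min s y · min 1 y · (2 + log y − log(min 1 y)) / y² , s ≥ 1
lemma LemB2 {s : ℝ} (hs : 1 ≤ s) :
    ∫ y in Ioi 0, min s y * min 1 y * (2 + (log y - log (min 1 y))) / y^2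
      = 5 + 3 * log s + (log s)^2/2 := by
  have hs0 : 0 < s := lt_of_lt_of_le one_pos hs
  have E1 : EqOn (fun _ : ℝ => (2:ℝ))
      (fun y => min s y * min 1 y * (2 + (log y - log (min 1 y))) / y^2) (Ioc 0 1) := by
    intro y hy
    have h1 : min s y = y := min_eq_right (hy.2.trans hs)
    have h2 : min 1 y = y := min_eq_right hy.2
    simp only [h1, h2, sub_self, add_zero]
    field_simp [hy.1.ne']
  have E2 : EqOn (fun y : ℝ => (2 + log y) / y)
      (fun y => min s y * min 1 y * (2 + (log y - log (min 1 y))) / y^2) (Ioc 1 s) := by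
    intro y hy
    have hy0 : (0:ℝ) < y := lt_trans one_pos hy.1
    have h1 : min s y = y := min_eq_right hy.2
    have h2 : min (1:ℝ) y = 1 := min_eq_left hy.1.le
    simp only [h1, h2, Real.log_one, sub_zero]
    field_simp
  have E3 : EqOn (fun y : ℝ => s * ((2 + log y) / y^2))
      (fun y => min s y * min 1 y * (2 + (log y - log (min 1 y))) / y^2) (Ioi s) := by
    intro y hy
    have h1 : min s y = s := min_eq_left (le_of_lt hy)
    have h2 : min (1:ℝ) y = 1 := min_eq_left (hs.trans (le_of_lt hy))
    simp only [h1, h2, Real.log_one, sub_zero]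
    ring
  have i1 : IntegrableOn
      (fun y : ℝ => min s y * min 1 y * (2 + (log y - log (min 1 y))) / y^2) (Ioc 0 1) :=
    (integrableOn_const (C := (2:ℝ)) measure_Ioc_lt_top.ne).congr_fun E1
      measurableSet_Ioc
  have i2 : IntegrableOn
      (fun y : ℝ => min s y * min 1 y * (2 + (log y - log (min 1 y))) / y^2) (Ioc 1 s) :=
    (P5 hs).1.congr_fun E2 measurableSet_Ioc
  have i3 : IntegrableOn
      (fun y : ℝ => min s y * min 1 y * (2 + (log y - log (min 1 y))) / y^2) (Ioi s) :=
    IntegrableOn.congr_fun ((P3 hs).1.const_mul s) E3 measurableSet_Ioi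
  have i23 : IntegrableOn
      (fun y : ℝ => min s y * min 1 y * (2 + (log y - log (min 1 y))) / y^2) (Ioi 1) := by
    rw [← Ioc_union_Ioi_eq_Ioi hs]; exact i2.union i3
  have v1 : ∫ y in Ioc 0 1, min s y * min 1 y * (2 + (log y - log (min 1 y))) / y^2
      = 2 := by
    rw [setIntegral_congr_fun measurableSet_Ioc E1.symm, Pconst one_pos.le]
    ring
  have v2 : ∫ y in Ioc 1 s, min s y * min 1 y * (2 + (log y - log (min 1 y))) / y^2
      = 2 * log s + (log s)^2/2 := by
    rw [setIntegral_congr_fun measurableSet_Ioc E2.symm, (P5 hs).2]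
  have v3 : ∫ y in Ioi s, min s y * min 1 y * (2 + (log y - log (min 1 y))) / y^2
      = 3 + log s := by
    rw [setIntegral_congr_fun measurableSet_Ioi E3.symm, integral_const_mul, (P3 hs).2]
    field_simp
  rw [splitIoi _ one_pos.le i1 i23, splitIoi _ hs i2 i3, v1, v2, v3]
  ring

-- inner integral over y₃
lemma Linner {y₁ y₂ : ℝ} (h0 : 0 < y₁) (h2 : 0 < y₂) :
    (∫ y₃ in Ioi (0:ℝ), (min 1 y₁ * min y₁ y₂ * min y₂ y₃ * min 1 (min y₁ (min y₂ y₃)))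
      / (y₁^2 * y₂^2 * y₃^2))
    = (min 1 y₁ * min y₁ y₂ / (y₁^2 * y₂^2)) *
        (min (min 1 y₁) y₂ * (2 + (log y₂ - log (min (min 1 y₁) y₂)))) := by
  have hb : 0 < min (min 1 y₁) y₂ := lt_min (lt_min one_pos h0) h2
  have hba : min (min 1 y₁) y₂ ≤ y₂ := min_le_right _ _
  have hfun : (fun y₃ : ℝ => (min 1 y₁ * min y₁ y₂ * min y₂ y₃ * min 1 (min y₁ (min y₂ y₃)))
      / (y₁^2 * y₂^2 * y₃^2))
      = fun y₃ : ℝ => (min 1 y₁ * min y₁ y₂ / (y₁^2 * y₂^2)) *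
          (min y₂ y₃ * min (min (min 1 y₁) y₂) y₃ / y₃^2) := by
    funext y₃
    have hm : min 1 (min y₁ (min y₂ y₃)) = min (min (min 1 y₁) y₂) y₃ := by
      rw [min_assoc, min_assoc]
    rw [hm]
    ring
  rw [hfun, integral_const_mul, LemA hb hba]

-- middle integral, case 0 < y₁ ≤ 1
lemma Lmid1 {y₁ : ℝ} (h0 : 0 < y₁) (h1 : y₁ ≤ 1) :
    (∫ y₂ in Ioi (0:ℝ), ∫ y₃ in Ioi (0:ℝ),
      (min 1 y₁ * min y₁ y₂ * min y₂ y₃ * min 1 (min y₁ (min y₂ y₃)))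
        / (y₁^2 * y₂^2 * y₃^2)) = 5 := by
  have hmin : min (1:ℝ) y₁ = y₁ := min_eq_right h1
  have E : EqOn
      (fun y₂ : ℝ => ∫ y₃ in Ioi (0:ℝ),
        (min 1 y₁ * min y₁ y₂ * min y₂ y₃ * min 1 (min y₁ (min y₂ y₃)))
          / (y₁^2 * y₂^2 * y₃^2))
      (fun y₂ : ℝ => (1/y₁) *
        (min y₁ y₂ * min y₁ y₂ * (2 + (log y₂ - log (min y₁ y₂))) / y₂^2)) (Ioi 0) := by
    intro y₂ hy₂
    simp only
    rw [Linner h0 hy₂, hmin]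
    have hy2 : y₂ ≠ 0 := ne_of_gt hy₂
    field_simp
  rw [setIntegral_congr_fun measurableSet_Ioi E, integral_const_mul, LemB1 h0]
  field_simp

-- middle integral, case 1 ≤ y₁
lemma Lmid2 {y₁ : ℝ} (h1 : 1 ≤ y₁) :
    (∫ y₂ in Ioi (0:ℝ), ∫ y₃ in Ioi (0:ℝ),
      (min 1 y₁ * min y₁ y₂ * min y₂ y₃ * min 1 (min y₁ (min y₂ y₃)))
        / (y₁^2 * y₂^2 * y₃^2)) = (5 + 3 * log y₁ + (log y₁)^2/2) / y₁^2 := by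
  have h0 : 0 < y₁ := lt_of_lt_of_le one_pos h1
  have hmin : min (1:ℝ) y₁ = 1 := min_eq_left h1
  have E : EqOn
      (fun y₂ : ℝ => ∫ y₃ in Ioi (0:ℝ),
        (min 1 y₁ * min y₁ y₂ * min y₂ y₃ * min 1 (min y₁ (min y₂ y₃)))
          / (y₁^2 * y₂^2 * y₃^2))
      (fun y₂ : ℝ => (1/y₁^2) *
        (min y₁ y₂ * min 1 y₂ * (2 + (log y₂ - log (min 1 y₂))) / y₂^2)) (Ioi 0) := by
    intro y₂ hy₂
    simp only
    rw [Linner h0 hy₂, hmin]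
    have hy2 : y₂ ≠ 0 := ne_of_gt hy₂
    field_simp
  rw [setIntegral_congr_fun measurableSet_Ioi E, integral_const_mul, LemB2 h1]
  ring

/-- the Laplace-transform integral computing m₆^{(2)}(𝕀,𝕀) on planar
kinematics equals 14, the fourth Catalan number. -/
theorem stmt_15 :
    ∫ y₁ in Set.Ioi (0 : ℝ), ∫ y₂ in Set.Ioi (0 : ℝ), ∫ y₃ in Set.Ioi (0 : ℝ),
      (min 1 y₁ * min y₁ y₂ * min y₂ y₃ * min 1 (min y₁ (min y₂ y₃)))
        / (y₁ ^ 2 * y₂ ^ 2 * y₃ ^ 2) = 14 := by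
  have E1 : EqOn (fun _ : ℝ => (5:ℝ))
      (fun y₁ : ℝ => ∫ y₂ in Ioi (0:ℝ), ∫ y₃ in Ioi (0:ℝ),
        (min 1 y₁ * min y₁ y₂ * min y₂ y₃ * min 1 (min y₁ (min y₂ y₃)))
          / (y₁ ^ 2 * y₂ ^ 2 * y₃ ^ 2)) (Ioc 0 1) :=
    fun y hy => (Lmid1 hy.1 hy.2).symm
  have E2 : EqOn (fun y : ℝ => (5 + 3 * log y + (log y)^2/2) / y^2)
      (fun y₁ : ℝ => ∫ y₂ in Ioi (0:ℝ), ∫ y₃ in Ioi (0:ℝ),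
        (min 1 y₁ * min y₁ y₂ * min y₂ y₃ * min 1 (min y₁ (min y₂ y₃)))
          / (y₁ ^ 2 * y₂ ^ 2 * y₃ ^ 2)) (Ioi 1) :=
    fun y hy => (Lmid2 (le_of_lt hy)).symm
  have i1 : IntegrableOn
      (fun y₁ : ℝ => ∫ y₂ in Ioi (0:ℝ), ∫ y₃ in Ioi (0:ℝ),
        (min 1 y₁ * min y₁ y₂ * min y₂ y₃ * min 1 (min y₁ (min y₂ y₃)))
          / (y₁ ^ 2 * y₂ ^ 2 * y₃ ^ 2)) (Ioc 0 1) :=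
    (integrableOn_const (C := (5:ℝ)) measure_Ioc_lt_top.ne).congr_fun E1
      measurableSet_Ioc
  have i2 : IntegrableOn
      (fun y₁ : ℝ => ∫ y₂ in Ioi (0:ℝ), ∫ y₃ in Ioi (0:ℝ),
        (min 1 y₁ * min y₁ y₂ * min y₂ y₃ * min 1 (min y₁ (min y₂ y₃)))
          / (y₁ ^ 2 * y₂ ^ 2 * y₃ ^ 2)) (Ioi 1) :=
    P4.1.congr_fun E2 measurableSet_Ioi
  rw [splitIoi _ one_pos.le i1 i2,
    setIntegral_congr_fun measurableSet_Ioc E1.symm,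
    setIntegral_congr_fun measurableSet_Ioi E2.symm,
    Pconst one_pos.le, P4.2]
  norm_num
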